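/- For any real numbers a and b, the function z ↦ (az+b)²/(1-z²) is convex on the open interval (-1, 1). -/

import Mathlib

open Set

lemma convexOn_inv_Ioi : ConvexOn ℝ (Set.Ioi (0:ℝ)) (fun x : ℝ => x⁻¹) := by
  have h := (strictConvexOn_zpow (m := -1) (by norm_num) (by norm_num)).convexOn
  convert h using 2 with x
  case e'_12 => simp [zpow_neg]
  all_goals rfl

lemma aff_conv (c d : ℝ) (hc : ∀ z ∈ Set.Ioo (-1:ℝ) 1, 0 < c + d * z) :
    ConvexOn ℝ (Set.Ioo (-1:ℝ) 1) (fun z : ℝ => (c + d * z)⁻¹) := by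
  have g : ℝ →ᵃ[ℝ] ℝ := 0
  let A : ℝ →ᵃ[ℝ] ℝ := ⟨fun z => c + d * z, d • (LinearMap.id : ℝ →ₗ[ℝ] ℝ), by
    intro p v; simp [vadd_eq_add]; ring⟩
  have h := (convexOn_inv_Ioi.comp_affineMap A).subset (fun z hz => hc z hz)
    (convex_Ioo _ _)
  exact h

theorem stmt_1 (a b : ℝ) :
    ConvexOn ℝ (Set.Ioo (-1 : ℝ) 1) (fun z => (a*z+b)^2 / (1 - z^2)) := by
  have h1 : ConvexOn ℝ (Set.Ioo (-1:ℝ) 1) (fun z : ℝ => (1 + (-1) * z)⁻¹) :=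
    aff_conv 1 (-1) (fun z hz => by nlinarith [hz.2])
  have h2 : ConvexOn ℝ (Set.Ioo (-1:ℝ) 1) (fun z : ℝ => (1 + 1 * z)⁻¹) :=
    aff_conv 1 1 (fun z hz => by nlinarith [hz.1])
  have hg : ConvexOn ℝ (Set.Ioo (-1:ℝ) 1)
      (fun z : ℝ => (-a^2 + ((a+b)^2/2) * (1 + (-1) * z)⁻¹)
        + ((a-b)^2/2) * (1 + 1 * z)⁻¹ ) := by
    refine ConvexOn.add (ConvexOn.add (convexOn_const _ (convex_Ioo _ _)) ?_) ?_
    · exact h1.smul (by positivity)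
    · exact h2.smul (by positivity)
  refine ⟨convex_Ioo _ _, fun x hx y hy s t hs ht hst => ?_⟩
  have key : ∀ z ∈ Set.Ioo (-1:ℝ) 1, (a*z+b)^2 / (1 - z^2)
      = (-a^2 + ((a+b)^2/2) * (1 + (-1) * z)⁻¹) + ((a-b)^2/2) * (1 + 1 * z)⁻¹ := by
    intro z hz
    have h1 : (1:ℝ) + (-1) * z ≠ 0 := by nlinarith [hz.2]
    have h2 : (1:ℝ) + 1 * z ≠ 0 := by nlinarith [hz.1]
    have h3 : (1:ℝ) - z^2 ≠ 0 := by nlinarith [hz.1, hz.2]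
    have h1' : (1:ℝ) - z ≠ 0 := by nlinarith [hz.2]
    have h2' : (1:ℝ) + z ≠ 0 := by nlinarith [hz.1]
    rw [show (1:ℝ) + (-1) * z = 1 - z by ring, show (1:ℝ) + 1 * z = 1 + z by ring]
    field_simp
    ring
  have hmem : s • x + t • y ∈ Set.Ioo (-1:ℝ) 1 :=
    (convex_Ioo (-1:ℝ) 1) hx hy hs ht hst
  simp only [key _ hx, key _ hy, key _ hmem]
  exact hg.2 hx hy hs ht hst
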